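/- Let λ ∈ h* be such that the Verma module M_λ is irreducible, V_r a finite-dimensional k-module, and φ_r : V_r → M̄_λ a nonzero k-intertwiner into the weight completion M̄_λ = Π_{μ≤λ} M_λ[μ]. Then the highest weight component of φ_r is nonzero: there exists v ∈ V_r with m_λ*(φ_r(v)) ≠ 0, where m_λ* is the linear functional on M̄_λ picking out the coefficient of the highest weight vector m_λ. Consequently the map hw : Hom_k(V_r, M̄_λ) → V_r*, φ_r ↦ (v ↦ m_λ*(φ_r v)), is injective. -/

import Mathlib

/-- Let `M̄ = M̄_λ` be the weight completion of an *irreducible* Verma module `M_λ` over a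
complex semisimple Lie algebra, `V_r` a finite-dimensional `k`-module, and
`φ_r : V_r → M̄_λ` a nonzero `k`-intertwiner.  Then the highest weight component of
`φ_r` is nonzero, and consequently `hw : Hom_k(V_r, M̄_λ) → V_r*` is injective.

Encoding: the weight structure of `M̄` is given by a family of commuting projections
`Pproj μ` (projection onto the weight-`μ` component) indexed by an ordered abelian group
`W` of weights, with support in `{μ ≤ λ}` and elements separated by their components;
`Eop i`, `Fop i` are the actions of `e_{α_i}`, `e_{−α_i}` (positive roots `α_i > 0`),
shifting weights by `±α_i`, and `y_{α_i} = e_{α_i} − e_{−α_i}` spans `k`.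
`hmax` encodes that any nonempty set of weights `≤ λ` has a maximal element, and `hirr`
encodes irreducibility of `M_λ`: the only singular weight `≤ λ` is `λ` itself.
`m_λ*(w) ≠ 0` for `0 ≠ w ∈ M̄[λ]` corresponds to `Pproj λ w ≠ 0` since `M_λ[λ]` is
one-dimensional. -/
theorem stmt_15
    (W : Type*) [AddCommGroup W] [PartialOrder W] [IsOrderedAddMonoid W]
    (lamW : W)
    (ιR : Type*) (αr : ιR → W) (hα : ∀ i, 0 < αr i)
    (Mbar : Type*) [AddCommGroup Mbar] [Module ℂ Mbar]
    (Pproj : W → (Mbar →ₗ[ℂ] Mbar))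
    (hPP : ∀ μ v, Pproj μ (Pproj μ v) = Pproj μ v)
    (hPsep : ∀ v : Mbar, (∀ μ, Pproj μ v = 0) → v = 0)
    (hPsupp : ∀ μ, ¬ μ ≤ lamW → Pproj μ = 0)
    (Eop Fop : ιR → (Mbar →ₗ[ℂ] Mbar))
    (hE : ∀ i μ v, Pproj μ (Eop i v) = Eop i (Pproj (μ - αr i) v))
    (hF : ∀ i μ v, Pproj μ (Fop i v) = Fop i (Pproj (μ + αr i) v))
    (hmax : ∀ S : Set W, S.Nonempty → (∀ μ ∈ S, μ ≤ lamW) →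
      ∃ m ∈ S, ∀ μ ∈ S, ¬ m < μ)
    (hirr : ∀ μ, μ ≤ lamW → ∀ v : Mbar, Pproj μ v = v → v ≠ 0 →
      (∀ i, Eop i v = 0) → μ = lamW)
    (V : Type*) [AddCommGroup V] [Module ℂ V] [FiniteDimensional ℂ V]
    (σv : ιR → (V →ₗ[ℂ] V))   -- the action of `y_{α_i}` on `V_r`
    (φ : V →ₗ[ℂ] Mbar)
    (hφ : ∀ i x, φ (σv i x) = Eop i (φ x) - Fop i (φ x)) :
    (φ ≠ 0 → ∃ x : V, Pproj lamW (φ x) ≠ 0)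
    ∧ (∀ ψ : V →ₗ[ℂ] Mbar,
        (∀ i x, ψ (σv i x) = Eop i (ψ x) - Fop i (ψ x)) →
        (∀ x, Pproj lamW (φ x) = Pproj lamW (ψ x)) → φ = ψ) := by
  have key : ∀ χ : V →ₗ[ℂ] Mbar,
      (∀ i x, χ (σv i x) = Eop i (χ x) - Fop i (χ x)) →
      (∀ x, Pproj lamW (χ x) = 0) → χ = 0 := by
    intro χ hχ h0
    by_contra hne
    -- support of χ
    set S : Set W := {μ | ∃ x, Pproj μ (χ x) ≠ 0} with hS
    have hSne : S.Nonempty := by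
      obtain ⟨x, hx⟩ : ∃ x, χ x ≠ 0 := by
        by_contra h
        push_neg at h
        exact hne (LinearMap.ext fun x => by simpa using h x)
      by_contra h
      push_neg at h
      simp only [Set.not_nonempty_iff_eq_empty, Set.eq_empty_iff_forall_notMem] at h
      exact hx (hPsep _ fun μ => by
        by_contra hc; exact h μ ⟨x, hc⟩)
    have hSle : ∀ μ ∈ S, μ ≤ lamW := by
      intro μ hμ
      obtain ⟨x, hx⟩ := hμ
      by_contra hc
      exact hx (by rw [hPsupp μ hc]; rfl)
    obtain ⟨m, hmS, hmmax⟩ := hmax S hSne hSle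
    obtain ⟨x, hx⟩ := hmS
    have hzero : ∀ ν, m < ν → ∀ y, Pproj ν (χ y) = 0 := by
      intro ν hν y
      by_contra hc
      exact hmmax ν ⟨y, hc⟩ hν
    set w : Mbar := Pproj m (χ x) with hw
    have hEw : ∀ i, Eop i w = 0 := by
      intro i
      have h1 : Pproj (m + αr i) (Eop i (χ x)) = Eop i w := by
        rw [hE i (m + αr i) (χ x), add_sub_cancel_right]
      have h2 : Pproj (m + αr i) (Fop i (χ x)) = 0 := by
        rw [hF i (m + αr i) (χ x), hzero (m + αr i + αr i)
          (by have := hα i; calc m < m + αr i := by simpa using this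
              _ < m + αr i + αr i := by simpa using this) x]
        simp
      have h3 : Pproj (m + αr i) (χ (σv i x)) = 0 :=
        hzero (m + αr i) (by simpa using hα i) _
      rw [hχ i x, map_sub, h1, h2, sub_zero] at h3
      exact h3.symm ▸ rfl
    have hm : m = lamW := hirr m (hSle m ⟨x, hx⟩) w (hPP m (χ x)) hx hEw
    exact hx (by rw [hw, hm]; exact h0 x)
  constructor
  · intro hne
    by_contra h
    push_neg at h
    exact hne (key φ hφ h)
  · intro ψ hψ hlam
    have : φ - ψ = 0 := by
      apply key
      · intro i x
        simp only [LinearMap.sub_apply, hφ, hψ, map_sub]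
        abel
      · intro x
        simp [LinearMap.sub_apply, hlam x]
    exact sub_eq_zero.mp this
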